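/- Let H be a complex Hilbert space (a complete inner product space over ℂ) and let A : H →L[ℂ] H be a continuous linear operator satisfying A ∘ A = 0. Then ‖A + A†‖ = ‖A‖ and ‖A − A†‖ = ‖A‖, where A† denotes the Hilbert-space adjoint of A; in particular both operator norms are bounded above by max(‖A‖, ‖A†‖). -/

import Mathlib

open ContinuousLinearMap
open scoped InnerProductSpace

section AuxNormAddAdjoint
variable {H : Type*} [NormedAddCommGroup H] [InnerProductSpace ℂ H] [CompleteSpace H]

private lemma aux_sq_zero_apply (A : H →L[ℂ] H) (hA : A ∘L A = 0) (x : H) :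
    A (A x) = 0 := by
  rw [← ContinuousLinearMap.comp_apply, hA]; rfl

private lemma aux_adj_zero (A : H →L[ℂ] H) (hA : A ∘L A = 0)
    {z : H} (hz : z ∈ (LinearMap.ker (A : H →ₗ[ℂ] H))ᗮ) : A.adjoint z = 0 := by
  rw [← inner_self_eq_zero (𝕜 := ℂ), ContinuousLinearMap.adjoint_inner_left]
  have hmem : A (A.adjoint z) ∈ LinearMap.ker (A : H →ₗ[ℂ] H) := by
    rw [LinearMap.mem_ker]
    exact aux_sq_zero_apply A hA _
  exact inner_eq_zero_symm.mp (hz _ hmem)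

private lemma aux_cross (A : H →L[ℂ] H) (hA : A ∘L A = 0) (x : H) :
    ⟪A x, A.adjoint x⟫_ℂ = 0 := by
  rw [ContinuousLinearMap.adjoint_inner_right, aux_sq_zero_apply A hA]
  simp

private lemma aux_norm_eq (A B : H →L[ℂ] H) (hA : A ∘L A = 0)
    (hB : ∀ x, ‖B x‖ ^ 2 = ‖A x‖ ^ 2 + ‖A.adjoint x‖ ^ 2) : ‖B‖ = ‖A‖ := by
  have hadjnorm : ‖A.adjoint‖ = ‖A‖ := ContinuousLinearMap.adjoint.norm_map A
  apply le_antisymm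
  · apply ContinuousLinearMap.opNorm_le_bound _ (norm_nonneg A)
    intro x
    obtain ⟨y, hy, z, hz, rfl⟩ := (LinearMap.ker (A : H →ₗ[ℂ] H)).exists_add_mem_mem_orthogonal x
    have hAx : A (y + z) = A z := by
      have h0 : A y = 0 := LinearMap.mem_ker.mp hy
      simp [h0]
    have hA'x : A.adjoint (y + z) = A.adjoint y := by
      simp [aux_adj_zero A hA hz]
    have hpyth : ‖y + z‖ ^ 2 = ‖y‖ ^ 2 + ‖z‖ ^ 2 := by
      have := norm_add_sq_eq_norm_sq_add_norm_sq_of_inner_eq_zero (𝕜 := ℂ) y z (hz y hy)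
      nlinarith
    have e1 : ‖A z‖ ≤ ‖A‖ * ‖z‖ := A.le_opNorm z
    have e2 : ‖A.adjoint y‖ ≤ ‖A‖ * ‖y‖ := by
      calc ‖A.adjoint y‖ ≤ ‖A.adjoint‖ * ‖y‖ := A.adjoint.le_opNorm y
      _ = ‖A‖ * ‖y‖ := by rw [hadjnorm]
    have h1 : ‖B (y + z)‖ ^ 2 ≤ (‖A‖ * ‖y + z‖) ^ 2 := by
      rw [hB, hAx, hA'x]
      calc ‖A z‖ ^ 2 + ‖A.adjoint y‖ ^ 2 ≤ (‖A‖ * ‖z‖) ^ 2 + (‖A‖ * ‖y‖) ^ 2 := by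
            gcongr <;> positivity
      _ = (‖A‖ * ‖y + z‖) ^ 2 := by rw [mul_pow, mul_pow, mul_pow, hpyth]; ring
    calc ‖B (y + z)‖ = √ (‖B (y + z)‖ ^ 2) := by
          rw [Real.sqrt_sq (norm_nonneg _)]
    _ ≤ √ ((‖A‖ * ‖y + z‖) ^ 2) := Real.sqrt_le_sqrt h1
    _ = ‖A‖ * ‖y + z‖ := Real.sqrt_sq (by positivity)
  · apply ContinuousLinearMap.opNorm_le_bound _ (norm_nonneg B)
    intro x
    have h1 : ‖A x‖ ^ 2 ≤ ‖B x‖ ^ 2 := by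
      rw [hB]
      exact le_add_of_nonneg_right (by positivity)
    calc ‖A x‖ ≤ ‖B x‖ := by nlinarith [norm_nonneg (A x), norm_nonneg (B x)]
    _ ≤ ‖B‖ * ‖x‖ := B.le_opNorm x

end AuxNormAddAdjoint

/-- If a bounded operator `A` on a complex Hilbert space satisfies `A ∘ A = 0`, then
`‖A + A†‖ = ‖A‖` and `‖A − A†‖ = ‖A‖`; in particular both norms are bounded above by
`max ‖A‖ ‖A†‖`. -/
theorem norm_add_adjoint_of_sq_eq_zero {H : Type*} [NormedAddCommGroup H]
    [InnerProductSpace ℂ H] [CompleteSpace H]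
    (A : H →L[ℂ] H) (hA : A ∘L A = 0) :
    ‖A + ContinuousLinearMap.adjoint A‖ = ‖A‖ ∧
    ‖A - ContinuousLinearMap.adjoint A‖ = ‖A‖ ∧
    ‖A + ContinuousLinearMap.adjoint A‖ ≤ max ‖A‖ ‖ContinuousLinearMap.adjoint A‖ ∧
    ‖A - ContinuousLinearMap.adjoint A‖ ≤ max ‖A‖ ‖ContinuousLinearMap.adjoint A‖ := by
  have hadd : ‖A + ContinuousLinearMap.adjoint A‖ = ‖A‖ := by
    apply aux_norm_eq A _ hA
    intro x
    have h := norm_add_sq_eq_norm_sq_add_norm_sq_of_inner_eq_zero (𝕜 := ℂ)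
      (A x) (A.adjoint x) (aux_cross A hA x)
    rw [ContinuousLinearMap.add_apply]
    nlinarith
  have hsub : ‖A - ContinuousLinearMap.adjoint A‖ = ‖A‖ := by
    apply aux_norm_eq A _ hA
    intro x
    have hcross : ⟪A x, -(ContinuousLinearMap.adjoint A x)⟫_ℂ = 0 := by
      rw [inner_neg_right, aux_cross A hA x, neg_zero]
    have h := norm_add_sq_eq_norm_sq_add_norm_sq_of_inner_eq_zero (𝕜 := ℂ)
      (A x) (-(ContinuousLinearMap.adjoint A x)) hcross
    rw [ContinuousLinearMap.sub_apply, sub_eq_add_neg]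
    rw [norm_neg] at h
    nlinarith
  refine ⟨hadd, hsub, ?_, ?_⟩ <;>
    simp [hadd, hsub, ContinuousLinearMap.adjoint.norm_map A]
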